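/- arXiv:2104.11609 — 6 statements merged into one kernel-verified Lean document; each statement's English description precedes it below -/
import Mathlib

section
/- Suppose y* minimizes J_i(·, y*_{-i}) + φ(·, y*_{-i}) for every i, where φ is the log-barrier with parameter ρ > 0 for the constraints g(y) ≤ 0 (g having p components). Then y* is an ε-generalized Nash equilibrium of the constrained game with ε = pρ; that is, for every i, J_i(y*_i, y*_{-i}) ≤ inf{ J_i(y_i, y*_{-i}) + pρ : g(y_i, y*_{-i}) ≤ 0 }. -/
open scoped RealInnerProductSpace

private lemma slope_lim : Filter.Tendsto (fun t : ℝ => -Real.log (1 - t) / t)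
    (nhdsWithin 0 (Set.Ioi 0)) (nhds 1) := by
  have h1 : HasDerivAt (fun t : ℝ => (1 : ℝ) - t) (-1) 0 := by
    simpa using (hasDerivAt_id' (0:ℝ)).const_sub (1:ℝ)
  have h2 : HasDerivAt Real.log ((1:ℝ)⁻¹) ((fun t : ℝ => (1:ℝ) - t) 0) := by
    simpa using Real.hasDerivAt_log (by norm_num : ((1:ℝ) - 0) ≠ 0)
  have h3 : HasDerivAt (fun t : ℝ => -Real.log (1 - t)) 1 0 := by
    have h : HasDerivAt (fun t : ℝ => -Real.log (1 - t)) (-((1:ℝ)⁻¹ * -1)) 0 := (h2.comp 0 h1).neg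
    convert h using 1; norm_num
  have h4 := hasDerivAt_iff_tendsto_slope.mp h3
  have h5 : Filter.Tendsto (slope (fun t : ℝ => -Real.log (1 - t)) 0)
      (nhdsWithin 0 (Set.Ioi 0)) (nhds 1) :=
    h4.mono_left (nhdsWithin_mono _ (by intro x hx; exact ne_of_gt hx))
  refine h5.congr' ?_
  filter_upwards [self_mem_nhdsWithin] with t ht
  simp [slope_def_field, div_eq_mul_inv, mul_comm]

/-- if `y*` is a Nash equilibrium of the log-barrier penalized game, then it
is an `ε`-GNE of the constrained game with `ε = pρ`. -/
theorem stmt1 {N p : ℕ} (m : Fin N → ℕ)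
    (J : ∀ _ : Fin N, (∀ j, EuclideanSpace ℝ (Fin (m j))) → ℝ)
    (g : (∀ j, EuclideanSpace ℝ (Fin (m j))) → Fin p → ℝ)
    (ρ : ℝ) (hρ : 0 < ρ)
    (φ : (∀ j, EuclideanSpace ℝ (Fin (m j))) → ℝ)
    (hφ : ∀ y, (∀ ℓ, g y ℓ < 0) → φ y = -ρ * ∑ ℓ, Real.log (-(g y ℓ)))
    (ystar : ∀ j, EuclideanSpace ℝ (Fin (m j)))
    (hfeas : ∀ ℓ, g ystar ℓ < 0)
    (hJconv : ∀ i, ConvexOn ℝ Set.univ (fun z => J i (Function.update ystar i z)))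
    (hJC1 : ∀ i, ContDiff ℝ 1 (fun z => J i (Function.update ystar i z)))
    (hgconv : ∀ ℓ i, ConvexOn ℝ Set.univ (fun z => g (Function.update ystar i z) ℓ))
    (hgC1 : ∀ ℓ i, ContDiff ℝ 1 (fun z => g (Function.update ystar i z) ℓ))
    (hNE : ∀ i z, (∀ ℓ, g (Function.update ystar i z) ℓ < 0) →
      J i ystar + φ ystar ≤ J i (Function.update ystar i z) + φ (Function.update ystar i z)) :
    ∀ i z, (∀ ℓ, g (Function.update ystar i z) ℓ ≤ 0) →
      J i ystar ≤ J i (Function.update ystar i z) + (p : ℝ) * ρ := by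
  intro i z hg
  set A := J i ystar with hA
  set B := J i (Function.update ystar i z) with hB
  have hupd : Function.update ystar i (ystar i) = ystar := Function.update_eq_self i ystar
  -- key bound for each t ∈ (0,1)
  have key : ∀ t : ℝ, 0 < t → t < 1 → A ≤ B + ρ * p * (-Real.log (1 - t) / t) := by
    intro t ht0 ht1
    have ht1' : 0 < 1 - t := by linarith
    set w : EuclideanSpace ℝ (Fin (m i)) := t • z + (1 - t) • (ystar i) with hw
    -- g bound at w
    have hgw : ∀ ℓ, g (Function.update ystar i w) ℓ ≤
        t * g (Function.update ystar i z) ℓ + (1 - t) * g ystar ℓ := by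
      intro ℓ
      have := (hgconv ℓ i).2 (Set.mem_univ z) (Set.mem_univ (ystar i))
        ht0.le ht1'.le (by ring)
      simpa [hupd, smul_eq_mul] using this
    have hgwlt : ∀ ℓ, g (Function.update ystar i w) ℓ < 0 := by
      intro ℓ
      have h1 : t * g (Function.update ystar i z) ℓ ≤ 0 :=
        mul_nonpos_of_nonneg_of_nonpos ht0.le (hg ℓ)
      have h2 : (1 - t) * g ystar ℓ < 0 := mul_neg_of_pos_of_neg ht1' (hfeas ℓ)
      calc g (Function.update ystar i w) ℓ ≤ _ := hgw ℓ
        _ < 0 := by linarith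
    -- lower bound on -g at w
    have hglb : ∀ ℓ, (1 - t) * (-(g ystar ℓ)) ≤ -(g (Function.update ystar i w) ℓ) := by
      intro ℓ
      have h1 : t * g (Function.update ystar i z) ℓ ≤ 0 :=
        mul_nonpos_of_nonneg_of_nonpos ht0.le (hg ℓ)
      have := hgw ℓ
      nlinarith
    -- log bound
    have hlog : ∀ ℓ : Fin p, Real.log (1 - t) + Real.log (-(g ystar ℓ)) ≤
        Real.log (-(g (Function.update ystar i w) ℓ)) := by
      intro ℓ
      have hpos : 0 < (1 - t) * (-(g ystar ℓ)) :=
        mul_pos ht1' (by linarith [hfeas ℓ])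
      calc Real.log (1 - t) + Real.log (-(g ystar ℓ))
          = Real.log ((1 - t) * (-(g ystar ℓ))) := by
            rw [Real.log_mul (ne_of_gt ht1') (by linarith [hfeas ℓ])]
        _ ≤ Real.log (-(g (Function.update ystar i w) ℓ)) :=
            Real.log_le_log hpos (hglb ℓ)
    -- φ bound
    have hφw : φ (Function.update ystar i w) ≤ φ ystar - ρ * p * Real.log (1 - t) := by
      rw [hφ _ hgwlt, hφ _ hfeas]
      have hsum : (p : ℝ) * Real.log (1 - t) + ∑ ℓ, Real.log (-(g ystar ℓ)) ≤
          ∑ ℓ, Real.log (-(g (Function.update ystar i w) ℓ)) := by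
        calc (p : ℝ) * Real.log (1 - t) + ∑ ℓ, Real.log (-(g ystar ℓ))
            = ∑ ℓ : Fin p, (Real.log (1 - t) + Real.log (-(g ystar ℓ))) := by
              rw [Finset.sum_add_distrib]; simp [Finset.sum_const, mul_comm]
          _ ≤ _ := Finset.sum_le_sum fun ℓ _ => hlog ℓ
      nlinarith [hsum, hρ.le]
    -- J bound at w
    have hJw : J i (Function.update ystar i w) ≤ t * B + (1 - t) * A := by
      have := (hJconv i).2 (Set.mem_univ z) (Set.mem_univ (ystar i))
        ht0.le ht1'.le (by ring)
      simpa [hupd, smul_eq_mul, hA, hB] using this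
    have hne := hNE i w hgwlt
    -- combine: A + φ* ≤ J(w) + φ(w) ≤ tB + (1-t)A + φ* - ρ p log(1-t)
    have hmain : t * (A - B) ≤ -(ρ * p * Real.log (1 - t)) := by nlinarith
    have : A - B ≤ ρ * p * (-Real.log (1 - t) / t) := by
      rw [mul_div_assoc', le_div_iff₀ ht0]
      nlinarith
    linarith
  -- take the limit t → 0+
  have hlim : Filter.Tendsto (fun t : ℝ => B + ρ * p * (-Real.log (1 - t) / t))
      (nhdsWithin 0 (Set.Ioi 0)) (nhds (B + ρ * p * 1)) :=
    (tendsto_const_nhds.add ((tendsto_const_nhds.mul slope_lim)))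
  have hev : ∀ᶠ t in nhdsWithin (0:ℝ) (Set.Ioi 0),
      A ≤ B + ρ * p * (-Real.log (1 - t) / t) := by
    filter_upwards [Ioo_mem_nhdsGT_of_mem (by norm_num : (0:ℝ) ∈ Set.Ico 0 1)] with t ht
    exact key t ht.1 ht.2
  have := ge_of_tendsto hlim hev
  have : A ≤ B + ρ * p := by simpa using this
  calc A ≤ B + ρ * p := this
    _ = B + (p : ℝ) * ρ := by ring
end

section
/- Let F : ℝ^m → ℝ^m be strictly monotone, ∇φ monotone, f : ℝ^n → ℝ^n, G ∈ ℝ^{n×m} full column rank, and V : ℝ^n → ℝ strongly convex C¹ with ∇V invertible, such that the map w ↦ -f((∇V)^{-1}(w)) is monotone. Suppose x* satisfies f(x*) - G(F(Gᵀ∇V(x*)) + ∇φ(Gᵀ∇V(x*))) = 0 with F(y*) + ∇φ(y*) = 0 for y* = Gᵀ∇V(x*). If x̄ is any other point with f(x̄) - G(F(ȳ) + ∇φ(ȳ)) = 0 where ȳ = Gᵀ∇V(x̄), then ȳ = y*. -/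
open scoped RealInnerProductSpace

/-- uniqueness of the equilibrium output for the full-information dynamics
(Lemma 6 of the paper): any other equilibrium `x̄` has output `ȳ = y*`. -/
theorem stmt5 {n m : ℕ}
    (f : EuclideanSpace ℝ (Fin n) → EuclideanSpace ℝ (Fin n))
    (G : EuclideanSpace ℝ (Fin m) →L[ℝ] EuclideanSpace ℝ (Fin n))
    (hG : Function.Injective G)
    (F Dφ : EuclideanSpace ℝ (Fin m) → EuclideanSpace ℝ (Fin m))
    (hF : ∀ y y', y ≠ y' → 0 < ⟪y - y', F y - F y'⟫)
    (hmonφ : ∀ y y', 0 ≤ ⟪y - y', Dφ y - Dφ y'⟫)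
    (V : EuclideanSpace ℝ (Fin n) → ℝ)
    (hVsc : ∀ x x', x ≠ x' → 0 < ⟪gradient V x - gradient V x', x - x'⟫)
    (invV : EuclideanSpace ℝ (Fin n) → EuclideanSpace ℝ (Fin n))
    (hinv1 : Function.LeftInverse invV (gradient V))
    (hinv2 : Function.RightInverse invV (gradient V))
    (hmonf : ∀ w w', 0 ≤ ⟪w - w', -(f (invV w)) - -(f (invV w'))⟫)
    (xstar : EuclideanSpace ℝ (Fin n)) (ystar : EuclideanSpace ℝ (Fin m))
    (hy : ystar = (ContinuousLinearMap.adjoint G) (gradient V xstar))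
    (hstat : F ystar + Dφ ystar = 0)
    (heq : f xstar - G (F ystar + Dφ ystar) = 0)
    (xbar : EuclideanSpace ℝ (Fin n)) (ybar : EuclideanSpace ℝ (Fin m))
    (hyb : ybar = (ContinuousLinearMap.adjoint G) (gradient V xbar))
    (heqb : f xbar - G (F ybar + Dφ ybar) = 0) :
    ybar = ystar := by
  by_contra hne
  set w := gradient V xbar with hw
  set ws := gradient V xstar with hws
  have hfb : f xbar = G (F ybar + Dφ ybar) := by
    have := sub_eq_zero.mp heqb; exact this
  have hfs : f xstar = G (F ystar + Dφ ystar) := by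
    have := sub_eq_zero.mp heq; exact this
  have hmf := hmonf w ws
  rw [hinv1 xbar, hinv1 xstar] at hmf
  have hle : ⟪w - ws, f xbar - f xstar⟫ ≤ 0 := by
    rw [neg_sub_neg] at hmf
    have h2 : f xbar - f xstar = -(f xstar - f xbar) := (neg_sub _ _).symm
    rw [h2, inner_neg_right]
    linarith
  have hkey : ⟪w - ws, f xbar - f xstar⟫
      = ⟪ybar - ystar, (F ybar + Dφ ybar) - (F ystar + Dφ ystar)⟫ := by
    rw [hfb, hfs, ← map_sub, real_inner_comm,
      ← ContinuousLinearMap.adjoint_inner_right, real_inner_comm, map_sub, ← hyb, ← hy]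
  have hpos : 0 < ⟪ybar - ystar, (F ybar + Dφ ybar) - (F ystar + Dφ ystar)⟫ := by
    have h1 := hF ybar ystar hne
    have h2 := hmonφ ybar ystar
    have : (F ybar + Dφ ybar) - (F ystar + Dφ ystar)
        = (F ybar - F ystar) + (Dφ ybar - Dφ ystar) := by abel
    rw [this, inner_add_right]
    linarith
  rw [hkey] at hle
  linarith
end

section
/- Let f(x) = Ax with A = [[-vI, kI],[0,0]] and input matrix G = [I; I]ᵀ stacked (i.e., ẋ = Ax + [I;I]u), output y = [I 0]x, with 0 < k < v. Then this system is equilibrium-independent passive: for every equilibrium x̄ with equilibrium input ū and output ȳ, there is a quadratic storage function V^{x̄}(x) ≥ 0 with V^{x̄}(x̄) = 0 such that ∇V^{x̄}(x)ᵀ(Ax + [I;I]u) ≤ (y - ȳ)ᵀ(u - ū) for all x, u. -/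
open scoped RealInnerProductSpace

/-- the PI-cascade system `ẋ¹ = -v x¹ + k x² + u`, `ẋ² = u`, `y = x¹`
with `0 < k < v` is equilibrium-independent passive: for each equilibrium
`x̄` (with `ū = 0`, `ȳ = x̄¹`) there is a quadratic storage function satisfying the
dissipation inequality. -/
theorem stmt8 {m : ℕ} (v k : ℝ) (hk : 0 < k) (hv : k < v)
    (xbar : EuclideanSpace ℝ (Fin m) × EuclideanSpace ℝ (Fin m))
    (ubar : EuclideanSpace ℝ (Fin m)) (hub : ubar = 0)
    (heq : -v • xbar.1 + k • xbar.2 + ubar = 0) :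
    ∃ V : EuclideanSpace ℝ (Fin m) × EuclideanSpace ℝ (Fin m) → ℝ,
      Differentiable ℝ V ∧
      (∃ B : (EuclideanSpace ℝ (Fin m) × EuclideanSpace ℝ (Fin m)) →ₗ[ℝ]
          (EuclideanSpace ℝ (Fin m) × EuclideanSpace ℝ (Fin m)) →ₗ[ℝ] ℝ,
        ∀ x, V x = B (x - xbar) (x - xbar)) ∧
      (∀ x, 0 ≤ V x) ∧ V xbar = 0 ∧
      (∀ (x : EuclideanSpace ℝ (Fin m) × EuclideanSpace ℝ (Fin m))
         (u : EuclideanSpace ℝ (Fin m)),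
        fderiv ℝ V x (-v • x.1 + k • x.2 + u, u) ≤ ⟪x.1 - xbar.1, u - ubar⟫) := by
  have hd : (0:ℝ) < v - k := by linarith
  have h0 : -v • xbar.1 + k • xbar.2 = 0 := by simpa [hub] using heq
  set c : ℝ := (2*(v-k))⁻¹ with hc
  have hcpos : 0 < c := by positivity
  set V : EuclideanSpace ℝ (Fin m) × EuclideanSpace ℝ (Fin m) → ℝ := fun x =>
    c * (v * ⟪x.1 - xbar.1, x.1 - xbar.1⟫ + k * ⟪x.2 - xbar.2, x.2 - xbar.2⟫
      - 2*k* ⟪x.1 - xbar.1, x.2 - xbar.2⟫) with hVdef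
  have key : ∀ x : EuclideanSpace ℝ (Fin m) × EuclideanSpace ℝ (Fin m),
      ∃ L : (EuclideanSpace ℝ (Fin m) × EuclideanSpace ℝ (Fin m)) →L[ℝ] ℝ,
      HasFDerivAt V L x ∧
      ∀ h : EuclideanSpace ℝ (Fin m) × EuclideanSpace ℝ (Fin m),
        L h = c * (v * (⟪x.1 - xbar.1, h.1⟫ + ⟪h.1, x.1 - xbar.1⟫)
        + k * (⟪x.2 - xbar.2, h.2⟫ + ⟪h.2, x.2 - xbar.2⟫)
        - 2*k*(⟪x.1 - xbar.1, h.2⟫ + ⟪h.1, x.2 - xbar.2⟫)) := by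
    intro x
    have hf1 : HasFDerivAt (fun y : EuclideanSpace ℝ (Fin m) × EuclideanSpace ℝ (Fin m) =>
        y.1 - xbar.1) (ContinuousLinearMap.fst ℝ _ _) x := (hasFDerivAt_fst).sub_const _
    have hf2 : HasFDerivAt (fun y : EuclideanSpace ℝ (Fin m) × EuclideanSpace ℝ (Fin m) =>
        y.2 - xbar.2) (ContinuousLinearMap.snd ℝ _ _) x := (hasFDerivAt_snd).sub_const _
    have h11 := hf1.inner ℝ hf1
    have h22 := hf2.inner ℝ hf2
    have h12 := hf1.inner ℝ hf2
    refine ⟨_, (((h11.const_mul v).add (h22.const_mul k)).sub (h12.const_mul (2*k))).const_mul c,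
      ?_⟩
    intro h
    simp only [ContinuousLinearMap.smul_apply, ContinuousLinearMap.add_apply,
      ContinuousLinearMap.sub_apply, ContinuousLinearMap.comp_apply,
      ContinuousLinearMap.prod_apply, ContinuousLinearMap.coe_fst', ContinuousLinearMap.coe_snd',
      fderivInnerCLM_apply, smul_eq_mul]
  refine ⟨V, fun x => ((key x).choose_spec.1).differentiableAt, ?_, ?_, ?_, ?_⟩
  · refine ⟨LinearMap.mk₂ ℝ (fun p q : EuclideanSpace ℝ (Fin m) × EuclideanSpace ℝ (Fin m) =>
      c * (v * ⟪p.1, q.1⟫ + k * ⟪p.2, q.2⟫ - k * ⟪p.1, q.2⟫ - k * ⟪p.2, q.1⟫))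
      (by intro p p' q
          simp only [Prod.fst_add, Prod.snd_add, inner_add_left]; ring)
      (by intro r p q
          simp only [Prod.smul_fst, Prod.smul_snd, real_inner_smul_left, smul_eq_mul]; ring)
      (by intro p q q'
          simp only [Prod.fst_add, Prod.snd_add, inner_add_right]; ring)
      (by intro r p q
          simp only [Prod.smul_fst, Prod.smul_snd, real_inner_smul_right, smul_eq_mul]; ring),
      ?_⟩
    intro x
    simp only [LinearMap.mk₂_apply, Prod.fst_sub, Prod.snd_sub, hVdef]
    rw [real_inner_comm (x.2 - xbar.2) (x.1 - xbar.1)]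
    ring
  · intro x
    obtain ⟨e1, he1⟩ : ∃ e1, e1 = x.1 - xbar.1 := ⟨_, rfl⟩
    obtain ⟨e2, he2⟩ : ∃ e2, e2 = x.2 - xbar.2 := ⟨_, rfl⟩
    have h1 : (0:ℝ) ≤ ⟪e1, e1⟫ := real_inner_self_nonneg
    have h2 : (0:ℝ) ≤ ⟪e1 - e2, e1 - e2⟫ := real_inner_self_nonneg
    have hx : ⟪e1 - e2, e1 - e2⟫ = ⟪e1,e1⟫ - 2*⟪e1,e2⟫ + ⟪e2,e2⟫ := by
      rw [inner_sub_left, inner_sub_right, inner_sub_right, real_inner_comm e2 e1]; ring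
    have hVx : V x = c * ((v-k)*⟪e1,e1⟫ + k*⟪e1 - e2, e1 - e2⟫) := by
      simp only [hVdef]; rw [← he1, ← he2, hx]; ring
    rw [hVx]
    exact mul_nonneg hcpos.le (add_nonneg (mul_nonneg hd.le h1) (mul_nonneg hk.le h2))
  · simp only [hVdef, sub_self, inner_zero_left, inner_zero_right, mul_zero, add_zero,
      sub_zero, zero_sub, neg_zero]
  · intro x u
    obtain ⟨L, hL, hLval⟩ := key x
    rw [hL.fderiv, hLval]
    obtain ⟨e1, he1⟩ : ∃ e1, e1 = x.1 - xbar.1 := ⟨_, rfl⟩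
    obtain ⟨e2, he2⟩ : ∃ e2, e2 = x.2 - xbar.2 := ⟨_, rfl⟩
    rw [← he1, ← he2]
    have hw : -v • x.1 + k • x.2 + u = -v • e1 + k • e2 + u := by
      have h' : -v • x.1 + k • x.2 + u
          = (-v • e1 + k • e2 + u) + (-v • xbar.1 + k • xbar.2) := by
        rw [he1, he2, smul_sub, smul_sub]; abel
      rw [h', h0, add_zero]
    rw [hub, sub_zero]
    simp only [hw]
    have E1 : ⟪e1, -v • e1 + k • e2 + u⟫ = -v*⟪e1,e1⟫ + k*⟪e1,e2⟫ + ⟪e1,u⟫ := by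
      simp only [inner_add_right, real_inner_smul_right]
    have E2 : ⟪-v • e1 + k • e2 + u, e1⟫ = -v*⟪e1,e1⟫ + k*⟪e1,e2⟫ + ⟪e1,u⟫ := by
      rw [real_inner_comm]; exact E1
    have E3 : ⟪-v • e1 + k • e2 + u, e2⟫ = -v*⟪e1,e2⟫ + k*⟪e2,e2⟫ + ⟪e2,u⟫ := by
      rw [real_inner_comm]
      simp only [inner_add_right, real_inner_smul_right, real_inner_comm e2 e1,
        real_inner_comm e2 u]
    have E4 : ⟪u, e2⟫ = ⟪e2,u⟫ := real_inner_comm _ _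
    simp only [E1, E2, E3, E4]
    have hS : (0:ℝ) ≤ ⟪v • e1 - k • e2, v • e1 - k • e2⟫ := real_inner_self_nonneg
    have hSx : ⟪v • e1 - k • e2, v • e1 - k • e2⟫
        = v*v*⟪e1,e1⟫ - 2*(v*k)*⟪e1,e2⟫ + k*k*⟪e2,e2⟫ := by
      rw [inner_sub_left, inner_sub_right, inner_sub_right]
      simp only [real_inner_smul_left, real_inner_smul_right, real_inner_comm e2 e1]
      ring
    rw [hSx] at hS
    rw [hc, inv_mul_le_iff₀ (by positivity)]
    nlinarith [hS]
end

section
/- Let S = {x ∈ ℝ^n : h_k(x) ≤ 0, k = 1,…,r} with h_k continuously differentiable, and suppose for every x ∈ ∂S there is a Lipschitz vector field f₀ with ∇h_k(x)ᵀ f₀(x) < 0 for all active k (all k with h_k(x) = 0), and the constraint qualification of a 'practical set' holds. Then for every x ∈ ∂S, the Bouligand tangent cone is T_S(x) = {z ∈ ℝ^n : ∇h_k(x)ᵀ z ≤ 0 for all active k}. -/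
set_option maxHeartbeats 1000000


open scoped RealInnerProductSpace

/-- Bouligand tangent cone of `S` at `x`. -/
noncomputable def bouligandCone {n : ℕ} (S : Set (EuclideanSpace ℝ (Fin n)))
    (x : EuclideanSpace ℝ (Fin n)) : Set (EuclideanSpace ℝ (Fin n)) :=
  {v | Filter.liminf (fun t : ℝ => Metric.infDist (x + t • v) S / t)
      (nhdsWithin 0 (Set.Ioi 0)) = 0}

open Filter Metric Set in
/-- Directional slope of a `C¹` function converges to the inner product with the gradient. -/
lemma lineSlope_tendsto {n : ℕ} {f : EuclideanSpace ℝ (Fin n) → ℝ}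
    (hf : ContDiff ℝ 1 f) (x w : EuclideanSpace ℝ (Fin n)) :
    Filter.Tendsto (fun t : ℝ => (f (x + t • w) - f x) / t)
      (nhdsWithin 0 (Set.Ioi 0)) (nhds ⟪gradient f x, w⟫) := by
  have hd : HasFDerivAt f (InnerProductSpace.toDual ℝ _ (gradient f x)) x :=
    (hf.differentiable one_ne_zero x).hasGradientAt.hasFDerivAt
  have hline : HasDerivAt (fun t : ℝ => x + t • w) w 0 := by
    simpa using ((hasDerivAt_id (0 : ℝ)).smul_const w).const_add x
  have hd' : HasFDerivAt f (InnerProductSpace.toDual ℝ _ (gradient f x))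
      ((fun t : ℝ => x + t • w) 0) := by simpa using hd
  have hcomp : HasDerivAt (fun t : ℝ => f (x + t • w)) ⟪gradient f x, w⟫ 0 := by
    simpa [InnerProductSpace.toDual_apply_apply, Function.comp_def] using hd'.comp_hasDerivAt 0 hline
  have := (hasDerivAt_iff_tendsto_slope.mp hcomp).mono_left
      (nhdsWithin_mono (0 : ℝ) (fun t (ht : t ∈ Set.Ioi (0:ℝ)) => ht.ne'))
  refine this.congr fun t => ?_
  simp [slope_def_field, div_eq_mul_inv, mul_comm]

/-- for a practical set `S = {x | h_k(x) ≤ 0}` satisfying the Slater-type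
condition and admitting an interior-pointing Lipschitz vector field, the Bouligand
tangent cone at a boundary point is `{z | ∇h_k(x)ᵀz ≤ 0 for all active k}`. -/
theorem stmt12 {n r : ℕ} (h : Fin r → EuclideanSpace ℝ (Fin n) → ℝ)
    (hC1 : ∀ k, ContDiff ℝ 1 (h k))
    (S : Set (EuclideanSpace ℝ (Fin n)))
    (hS : S = {x | ∀ k, h k x ≤ 0})
    (hslater : ∀ x ∈ S, ∃ z, ∀ k, h k x + ⟪gradient (h k) x, z⟫ < 0)
    (f₀ : EuclideanSpace ℝ (Fin n) → EuclideanSpace ℝ (Fin n))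
    (K : NNReal) (hf₀lip : LipschitzWith K f₀)
    (hf₀ : ∀ x ∈ frontier S, ∀ k, h k x = 0 → ⟪gradient (h k) x, f₀ x⟫ < 0) :
    ∀ x ∈ frontier S,
      bouligandCone S x = {z | ∀ k, h k x = 0 → ⟪gradient (h k) x, z⟫ ≤ 0} := by
  intro x hx
  have hSclosed : IsClosed S := by
    have : S = ⋂ k, (h k) ⁻¹' Set.Iic 0 := by rw [hS]; ext y; simp
    rw [this]
    exact isClosed_iInter fun k => IsClosed.preimage (hC1 k).continuous isClosed_Iic
  have hxS : x ∈ S := hSclosed.frontier_subset hx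
  have hne : S.Nonempty := ⟨x, hxS⟩
  ext z
  simp only [bouligandCone, Set.mem_setOf_eq]
  -- the function whose liminf we study
  set u : EuclideanSpace ℝ (Fin n) → ℝ → ℝ :=
    fun v t => Metric.infDist (x + t • v) S / t with hu
  have hpos_mem : ∀ᶠ t in nhdsWithin (0:ℝ) (Set.Ioi 0), (0:ℝ) < t :=
    eventually_mem_nhdsWithin
  have hub : ∀ v, ∀ᶠ t in nhdsWithin (0:ℝ) (Set.Ioi 0), u v t ≤ ‖v‖ := by
    intro v
    filter_upwards [hpos_mem] with t ht
    have h1 : Metric.infDist (x + t • v) S ≤ t * ‖v‖ := by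
      have := Metric.infDist_le_dist_of_mem (x := x + t • v) hxS
      calc Metric.infDist (x + t • v) S ≤ dist (x + t • v) x := this
        _ = ‖t • v‖ := by rw [dist_eq_norm]; congr 1; abel
        _ = t * ‖v‖ := by rw [norm_smul, Real.norm_eq_abs, abs_of_pos ht]
    rw [hu]
    exact div_le_of_le_mul₀ ht.le (norm_nonneg v) (by linarith [h1])
  have hlb : ∀ v, ∀ᶠ t in nhdsWithin (0:ℝ) (Set.Ioi 0), (0:ℝ) ≤ u v t := by
    intro v
    filter_upwards [hpos_mem] with t ht
    exact div_nonneg Metric.infDist_nonneg ht.le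
  have hbddabove : ∀ v, Filter.IsBoundedUnder (· ≤ ·) (nhdsWithin (0:ℝ) (Set.Ioi 0)) (u v) :=
    fun v => ⟨‖v‖, by simpa [Filter.eventually_map] using hub v⟩
  have hbddbelow : ∀ v, Filter.IsBoundedUnder (· ≥ ·) (nhdsWithin (0:ℝ) (Set.Ioi 0)) (u v) :=
    fun v => ⟨0, by simpa [Filter.eventually_map] using hlb v⟩
  constructor
  · -- ⊆ : tangent vectors satisfy the linearized constraints
    intro hz k hk
    by_contra hpos
    push_neg at hpos
    set c : ℝ := ⟪gradient (h k) x, z⟫ with hc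
    obtain ⟨L, s, hs, hLip⟩ := ((hC1 k).contDiffAt (x := x)).exists_lipschitzOnWith
    obtain ⟨ρ, hρ, hball⟩ := Metric.mem_nhds_iff.mp hs
    set δ : ℝ := c / (4 * ((L : ℝ) + 1)) with hδ
    have hL1 : (0:ℝ) < (L : ℝ) + 1 := by positivity
    have hδpos : 0 < δ := by positivity
    -- frequently the normalized distance is small
    have hfreq : ∃ᶠ t in nhdsWithin (0:ℝ) (Set.Ioi 0), u z t < δ := by
      apply Filter.frequently_lt_of_liminf_lt (hbddabove z).isCoboundedUnder_ge
      rw [hz]; exact hδpos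
    -- eventually the slope is large
    have hslope : ∀ᶠ t in nhdsWithin (0:ℝ) (Set.Ioi 0),
        c / 2 < (h k (x + t • z) - h k x) / t := by
      have := lineSlope_tendsto (hC1 k) x z
      exact this.eventually_const_lt (by rw [← hc]; linarith)
    -- eventually we are close enough to x
    have hclose : ∀ᶠ t in nhdsWithin (0:ℝ) (Set.Ioi 0),
        t * ‖z‖ < ρ / 2 ∧ t * δ < ρ / 2 := by
      have hmul : ∀ a : ℝ, Filter.Tendsto (fun t : ℝ => t * a)
          (nhdsWithin (0:ℝ) (Set.Ioi 0)) (nhds 0) := by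
        intro a
        have hid : Filter.Tendsto (id : ℝ → ℝ) (nhdsWithin (0:ℝ) (Set.Ioi 0))
            (nhds 0) := Filter.Tendsto.mono_left Filter.tendsto_id nhdsWithin_le_nhds
        simpa using hid.mul_const a
      have h1 := hmul ‖z‖
      have h2 := hmul δ
      exact (h1.eventually_lt_const (by linarith)).and (h2.eventually_lt_const (by linarith))
    obtain ⟨t, htsmall, htslope, ⟨ht1, ht2⟩, htpos⟩ :=
      (hfreq.and_eventually (hslope.and (hclose.and hpos_mem))).exists
    -- pick a nearby point of S
    have hdistlt : Metric.infDist (x + t • z) S < t * δ := by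
      have := (div_lt_iff₀ htpos).mp htsmall
      linarith [this]
    obtain ⟨y, hyS, hyd⟩ := (Metric.infDist_lt_iff hne).mp hdistlt
    -- both points lie in the Lipschitz neighborhood
    have hxt_ball : x + t • z ∈ Metric.ball x ρ := by
      rw [Metric.mem_ball, dist_eq_norm]
      have : x + t • z - x = t • z := by abel
      rw [this, norm_smul, Real.norm_eq_abs, abs_of_pos htpos]
      linarith
    have hy_ball : y ∈ Metric.ball x ρ := by
      rw [Metric.mem_ball]
      calc dist y x ≤ dist y (x + t • z) + dist (x + t • z) x := dist_triangle _ _ _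
        _ < t * δ + ρ / 2 := by
            rw [dist_comm y (x + t • z)]
            have : dist (x + t • z) x = t * ‖z‖ := by
              rw [dist_eq_norm]
              have : x + t • z - x = t • z := by abel
              rw [this, norm_smul, Real.norm_eq_abs, abs_of_pos htpos]
            rw [this]; exact add_lt_add hyd ht1
        _ < ρ / 2 + ρ / 2 := by linarith
        _ = ρ := by ring
    -- Lipschitz estimate
    have hyS' : h k y ≤ 0 := by rw [hS] at hyS; exact hyS k
    have hlip_est : h k (x + t • z) - h k y ≤ (L : ℝ) * dist (x + t • z) y := by
      have := hLip.dist_le_mul (x + t • z) (hball hxt_ball) y (hball hy_ball)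
      rw [Real.dist_eq] at this
      calc h k (x + t • z) - h k y ≤ |h k (x + t • z) - h k y| := le_abs_self _
        _ ≤ (L : ℝ) * dist (x + t • z) y := this
    have hub2 : h k (x + t • z) ≤ ((L : ℝ) + 1) * (t * δ) := by
      have hd : dist (x + t • z) y ≤ t * δ := hyd.le
      have hL0 : (0:ℝ) ≤ (L : ℝ) := L.coe_nonneg
      nlinarith [Metric.infDist_nonneg (x := x + t • z) (s := S), htpos, hδpos]
    have hlb2 : t * (c / 2) < h k (x + t • z) := by
      have := (div_lt_iff₀' htpos).mp (by rwa [hk, sub_zero] at htslope; )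
      calc t * (c / 2) = c / 2 * t := by ring
        _ < h k (x + t • z) := by
            have h' := (lt_div_iff₀ htpos).mp (by rwa [hk, sub_zero] at htslope)
            linarith
    have : ((L : ℝ) + 1) * (t * δ) = t * (c / 4) := by
      rw [hδ]; field_simp
    rw [this] at hub2
    nlinarith
  · -- ⊇ : linearized-feasible directions are tangent
    intro hz
    have hxS' : ∀ k, h k x ≤ 0 := by rw [hS] at hxS; exact hxS
    -- key estimate
    have key : ∀ ε : ℝ, 0 < ε → ∀ᶠ t in nhdsWithin (0:ℝ) (Set.Ioi 0),
        u z t ≤ ε * ‖f₀ x‖ := by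
      intro ε hε
      set w : EuclideanSpace ℝ (Fin n) := z + ε • f₀ x with hw
      have hmem : ∀ᶠ t in nhdsWithin (0:ℝ) (Set.Ioi 0), x + t • w ∈ S := by
        rw [hS]
        simp only [Set.mem_setOf_eq]
        rw [Filter.eventually_all]
        intro k
        rcases lt_or_eq_of_le (hxS' k) with hlt | heq
        · -- inactive constraint: continuity
          have hcont : Filter.Tendsto (fun t : ℝ => h k (x + t • w))
              (nhdsWithin (0:ℝ) (Set.Ioi 0)) (nhds (h k x)) := by
            have : Continuous fun t : ℝ => h k (x + t • w) :=
              (hC1 k).continuous.comp (continuous_const.add (continuous_id.smul continuous_const))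
            simpa using (this.tendsto 0).mono_left nhdsWithin_le_nhds
          filter_upwards [hcont.eventually_lt_const hlt] with t ht
          exact ht.le
        · -- active constraint
          have hk : h k x = 0 := heq
          have hneg : ⟪gradient (h k) x, w⟫ < 0 := by
            rw [hw, inner_add_right, real_inner_smul_right]
            have h1 := hz k hk
            have h2 := hf₀ x hx k hk
            nlinarith
          have hslope := (lineSlope_tendsto (hC1 k) x w).eventually_lt_const hneg
          filter_upwards [hslope, hpos_mem] with t hts htpos
          rw [hk, sub_zero] at hts
          have := (div_lt_iff₀ htpos).mp hts
          linarith
      filter_upwards [hmem, hpos_mem] with t htS htpos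
      have hd : Metric.infDist (x + t • z) S ≤ dist (x + t • z) (x + t • w) :=
        Metric.infDist_le_dist_of_mem htS
      have : dist (x + t • z) (x + t • w) = t * (ε * ‖f₀ x‖) := by
        rw [dist_eq_norm]
        have : x + t • z - (x + t • w) = (-(t * ε)) • f₀ x := by
          rw [hw]; simp [smul_add, smul_smul]
        rw [this, norm_smul, Real.norm_eq_abs, abs_neg,
          abs_of_pos (mul_pos htpos hε), mul_assoc]
      rw [hu]
      rw [this] at hd
      exact div_le_of_le_mul₀ htpos.le (by positivity) (by linarith)
    have hge : (0:ℝ) ≤ Filter.liminf (u z) (nhdsWithin (0:ℝ) (Set.Ioi 0)) :=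
      Filter.le_liminf_of_le ((hbddabove z).isCoboundedUnder_ge) (hlb z)
    have hle : Filter.liminf (u z) (nhdsWithin (0:ℝ) (Set.Ioi 0)) ≤ 0 := by
      refine le_of_forall_pos_le_add fun δ hδ => ?_
      have hεpos : 0 < δ / (‖f₀ x‖ + 1) := by positivity
      have h1 := Filter.liminf_le_of_frequently_le
        ((key _ hεpos).frequently) (hbddbelow z)
      have h2 : δ / (‖f₀ x‖ + 1) * ‖f₀ x‖ ≤ δ := by
        rw [div_mul_eq_mul_div, div_le_iff₀ (by positivity)]
        nlinarith [norm_nonneg (f₀ x), hδ.le]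
      linarith
    linarith
end

section
/- Nagumo's theorem for locally Lipschitz vector fields: a closed set 𝒳 ⊆ ℝ^n is positively invariant for ẋ = f(x) (f locally Lipschitz, solutions assumed to exist globally) if and only if f(x) ∈ T_𝒳(x) for all x ∈ 𝒳, where T_𝒳(x) is the Bouligand tangent cone. -/
open scoped RealInnerProductSpace

open Metric Set Filter Topology

/-- From tangent-cone membership, the distance quotient is frequently small. -/
lemma bouligand_frequently {n : ℕ} {S : Set (EuclideanSpace ℝ (Fin n))}
    {p v : EuclideanSpace ℝ (Fin n)} (hp : p ∈ S) (hv : v ∈ bouligandCone S p)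
    {ε : ℝ} (hε : 0 < ε) :
    ∃ᶠ h in 𝓝[>] (0:ℝ), infDist (p + h • v) S / h < ε := by
  have hub : ∀ᶠ h in 𝓝[>] (0:ℝ), infDist (p + h • v) S / h ≤ ‖v‖ := by
    filter_upwards [self_mem_nhdsWithin] with h (hh : 0 < h)
    have h1 : infDist (p + h • v) S ≤ dist (p + h • v) p := infDist_le_dist_of_mem hp
    have h2 : dist (p + h • v) p = h * ‖v‖ := by
      rw [dist_eq_norm]
      simp [norm_smul, abs_of_pos hh]
    rw [div_le_iff₀ hh]
    calc infDist (p + h • v) S ≤ h * ‖v‖ := h2 ▸ h1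
      _ = ‖v‖ * h := by ring
  have hcb : IsCoboundedUnder (· ≥ ·) (𝓝[>] (0:ℝ))
      (fun h => infDist (p + h • v) S / h) :=
    isCoboundedUnder_ge_of_eventually_le _ hub
  have : liminf (fun h : ℝ => infDist (p + h • v) S / h) (𝓝[>] (0:ℝ)) < ε := by
    rw [hv]; exact hε
  exact frequently_lt_of_liminf_lt hcb this

/-- Key extension step of Nagumo's theorem: starting from a point of `X` on the
trajectory, the trajectory stays in `X` a bit longer. -/
lemma nagumo_extend {n : ℕ} {f : EuclideanSpace ℝ (Fin n) → EuclideanSpace ℝ (Fin n)}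
    (hf : LocallyLipschitz f) {X : Set (EuclideanSpace ℝ (Fin n))}
    (hX : IsClosed X) (hXne : X.Nonempty)
    (hcone : ∀ p ∈ X, f p ∈ bouligandCone X p)
    {x : ℝ → EuclideanSpace ℝ (Fin n)} (hx : ∀ t, HasDerivAt x (f (x t)) t)
    {τ b : ℝ} (hτb : τ < b) (hxτ : x τ ∈ X) :
    ∃ c, τ < c ∧ c ≤ b ∧ ∀ s ∈ Icc τ c, x s ∈ X := by
  obtain ⟨K, tset, htset, hK⟩ := hf (x τ)
  obtain ⟨ε, hε, hball⟩ := Metric.mem_nhds_iff.mp htset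
  -- continuity of x at τ gives a δ with dist (x u) (x τ) < ε/4 on [τ, τ+δ]
  have hcont : ContinuousAt x τ := (hx τ).continuousAt
  have hev : ∀ᶠ u in 𝓝 τ, dist (x u) (x τ) < ε / 4 :=
    hcont (Metric.ball_mem_nhds _ (by linarith))
  obtain ⟨δ, hδ, hδball⟩ := Metric.eventually_nhds_iff_ball.mp hev
  set c := min b (τ + δ / 2) with hc
  have hτc : τ < c := lt_min hτb (by linarith)
  have hcb : c ≤ b := min_le_left _ _
  have hclose : ∀ s ∈ Icc τ c, dist (x s) (x τ) < ε / 4 := by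
    intro s hs
    apply hδball
    rw [Metric.mem_ball, Real.dist_eq, abs_of_nonneg (by linarith [hs.1])]
    have : s ≤ τ + δ / 2 := le_trans hs.2 (min_le_right _ _)
    linarith
  set g : ℝ → ℝ := fun u => infDist (x u) X with hg
  have hxc : Continuous x := continuous_iff_continuousAt.mpr fun t => (hx t).continuousAt
  have hgc : ContinuousOn g (Icc τ c) :=
    ((continuous_infDist_pt X).comp hxc).continuousOn
  have key : ∀ s ∈ Icc τ c, g s ≤ gronwallBound 0 K 0 (s - τ) := by
    apply le_gronwallBound_of_liminf_deriv_right_le (f' := fun u => (K : ℝ) * g u) hgc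
    · -- slope estimate
      intro s hs r hr
      have hsτc : s ∈ Icc τ c := ⟨hs.1, le_of_lt hs.2⟩
      have hs4 : dist (x s) (x τ) < ε / 4 := hclose s hsτc
      obtain ⟨p, hpX, hp⟩ := hX.exists_infDist_eq_dist hXne (x s)
      have hgs4 : g s < ε / 4 := lt_of_le_of_lt (infDist_le_dist_of_mem hxτ) hs4
      have hxst : x s ∈ tset := hball (by rw [Metric.mem_ball]; linarith)
      have hpt : p ∈ tset := by
        apply hball
        rw [Metric.mem_ball]
        have : dist p (x τ) ≤ dist p (x s) + dist (x s) (x τ) := dist_triangle _ _ _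
        have hps : dist p (x s) = g s := by rw [dist_comm]; exact hp.symm
        rw [hps] at this
        linarith
      have hfl : dist (f (x s)) (f p) ≤ K * g s := by
        have := hK.dist_le_mul _ hxst _ hpt
        rwa [← hp] at this
      set ε' := (r - K * g s) / 3 with hε'def
      have hε' : 0 < ε' := by rw [hε'def]; linarith
      have freq := bouligand_frequently hpX (hcone p hpX) hε'
      -- transfer to a frequently statement at s
      have hmap : Filter.map (fun h : ℝ => s + h) (𝓝[>] (0:ℝ)) = 𝓝[>] s := by
        have := (Homeomorph.addLeft s).isEmbedding.map_nhdsWithin_eq (Ioi (0:ℝ)) 0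
        simpa [image_const_add_Ioi] using this
      rw [← hmap, frequently_map]
      -- derivative estimate
      have hlo := hasDerivAt_iff_isLittleO.mp (hx s)
      have hev2 : ∀ᶠ u in 𝓝 s, ‖x u - x s - (u - s) • f (x s)‖ ≤ ε' * ‖u - s‖ :=
        hlo.bound hε'
      have htends : Tendsto (fun h : ℝ => s + h) (𝓝[>] (0:ℝ)) (𝓝 s) := by
        have : Tendsto (fun h : ℝ => s + h) (𝓝 (0:ℝ)) (𝓝 s) := by
          simpa using (continuous_add_left s).tendsto (0:ℝ)
        exact this.mono_left nhdsWithin_le_nhds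
      have hev3 : ∀ᶠ h in 𝓝[>] (0:ℝ),
          ‖x (s + h) - x s - h • f (x s)‖ ≤ ε' * h := by
        filter_upwards [htends.eventually hev2, self_mem_nhdsWithin] with h hb (hh : 0 < h)
        have := hb
        simpa [abs_of_pos hh] using this
      refine (freq.and_eventually (hev3.and self_mem_nhdsWithin)).mono ?_
      rintro h ⟨hfr, hde, (hh : 0 < h)⟩
      -- the main estimate
      have hd1 : infDist (x (s + h)) X ≤
          infDist (p + h • f p) X + dist (x (s + h)) (p + h • f p) :=
        infDist_le_infDist_add_dist
      have hd2 : dist (x (s + h)) (p + h • f p) ≤ ε' * h + g s + h * (K * g s) := by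
        have heq : x (s + h) - (p + h • f p) =
            (x (s + h) - x s - h • f (x s)) + (x s - p) + h • (f (x s) - f p) := by
          module
        rw [dist_eq_norm, heq]
        have h1 : ‖x s - p‖ = g s := by rw [← dist_eq_norm]; exact hp.symm
        have h2 : ‖h • (f (x s) - f p)‖ ≤ h * (K * g s) := by
          rw [norm_smul, Real.norm_eq_abs, abs_of_pos hh]
          exact mul_le_mul_of_nonneg_left (by rwa [← dist_eq_norm]) hh.le
        calc ‖(x (s + h) - x s - h • f (x s)) + (x s - p) + h • (f (x s) - f p)‖
            ≤ ‖(x (s + h) - x s - h • f (x s)) + (x s - p)‖ + ‖h • (f (x s) - f p)‖ :=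
              norm_add_le _ _
          _ ≤ ‖x (s + h) - x s - h • f (x s)‖ + ‖x s - p‖ + ‖h • (f (x s) - f p)‖ := by
              gcongr; exact norm_add_le _ _
          _ ≤ ε' * h + g s + h * (K * g s) := by rw [h1]; gcongr
      have hd3 : infDist (p + h • f p) X < ε' * h := by
        rw [div_lt_iff₀ hh] at hfr; linarith
      have hgtot : g (s + h) - g s < h * r := by
        have : g (s + h) ≤ ε' * h + (ε' * h + g s + h * (K * g s)) := by
          calc g (s + h) ≤ infDist (p + h • f p) X + dist (x (s + h)) (p + h • f p) := hd1
            _ ≤ ε' * h + (ε' * h + g s + h * (K * g s)) := by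
                have := hd3.le; linarith
        have hrr : (K : ℝ) * g s + 3 * ε' = r := by rw [hε'def]; ring
        nlinarith
      have : (s + h - s)⁻¹ * (g (s + h) - g s) < r := by
        rw [add_sub_cancel_left, inv_mul_lt_iff₀ hh]
        linarith [hgtot]
      exact this
    · simp [hg, infDist_zero_of_mem hxτ]
    · intro u _; simp
  refine ⟨c, hτc, hcb, fun s hs => ?_⟩
  have h1 := key s hs
  rw [gronwallBound_ε0_δ0] at h1
  have h2 : g s = 0 := le_antisymm h1 infDist_nonneg
  exact (hX.mem_iff_infDist_zero hXne).mpr h2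

/-- Nagumo's theorem: for a locally Lipschitz vector field whose solutions
exist globally, a closed set `𝒳` is positively invariant for `ẋ = f(x)` iff
`f(x) ∈ T_𝒳(x)` for all `x ∈ 𝒳`. -/
theorem stmt13 {n : ℕ} (f : EuclideanSpace ℝ (Fin n) → EuclideanSpace ℝ (Fin n))
    (hf : LocallyLipschitz f)
    (hglob : ∀ x₀ : EuclideanSpace ℝ (Fin n), ∃ x : ℝ → EuclideanSpace ℝ (Fin n),
      x 0 = x₀ ∧ ∀ t, HasDerivAt x (f (x t)) t)
    (X : Set (EuclideanSpace ℝ (Fin n))) (hX : IsClosed X) :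
    (∀ p ∈ X, f p ∈ bouligandCone X p) ↔
      (∀ x : ℝ → EuclideanSpace ℝ (Fin n),
        (∀ t, HasDerivAt x (f (x t)) t) → x 0 ∈ X → ∀ t, 0 ≤ t → x t ∈ X) := by
  constructor
  · intro hcone x hx hx0 t ht
    have hXne : X.Nonempty := ⟨x 0, hx0⟩
    rcases eq_or_lt_of_le ht with h | h
    · rwa [← h]
    set A := {c | c ∈ Icc 0 t ∧ ∀ s ∈ Icc 0 c, x s ∈ X} with hA
    have h0A : (0:ℝ) ∈ A := by
      refine ⟨⟨le_refl 0, ht⟩, fun s hs => ?_⟩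
      have : s = 0 := le_antisymm hs.2 hs.1
      rwa [this]
    have hAne : A.Nonempty := ⟨0, h0A⟩
    have hbdd : BddAbove A := ⟨t, fun a ha => ha.1.2⟩
    set τ := sSup A with hτ
    have hτ0 : 0 ≤ τ := le_csSup hbdd h0A
    have hτt : τ ≤ t := csSup_le hAne fun a ha => ha.1.2
    have hlt : ∀ s, 0 ≤ s → s < τ → x s ∈ X := by
      intro s hs0 hsτ
      obtain ⟨a, haA, hsa⟩ := exists_lt_of_lt_csSup hAne hsτ
      exact haA.2 s ⟨hs0, hsa.le⟩
    have hxτX : x τ ∈ X := by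
      rcases eq_or_lt_of_le hτ0 with h0 | h0
      · rwa [← h0]
      · have htend : Tendsto x (𝓝[<] τ) (𝓝 (x τ)) :=
          ((hx τ).continuousAt).continuousWithinAt
        refine hX.mem_of_tendsto htend ?_
        have hmem : Ioo 0 τ ∈ 𝓝[<] τ := by
          rw [mem_nhdsWithin]
          exact ⟨Ioi 0, isOpen_Ioi, h0, by
            intro y hy
            exact ⟨hy.1, hy.2⟩⟩
        filter_upwards [hmem] with s hs
        exact hlt s hs.1.le hs.2
    by_contra hxt
    have hτlt : τ < t := by
      rcases eq_or_lt_of_le hτt with h1 | h1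
      · exact absurd (h1 ▸ hxτX) hxt
      · exact h1
    obtain ⟨c, hc1, hc2, hc3⟩ := nagumo_extend hf hX hXne hcone hx hτlt hxτX
    have hcA : c ∈ A := by
      refine ⟨⟨le_trans hτ0 hc1.le, hc2⟩, fun s hs => ?_⟩
      rcases lt_or_ge s τ with h' | h'
      · exact hlt s hs.1 h'
      · exact hc3 s ⟨h', hs.2⟩
    exact absurd (le_csSup hbdd hcA) (not_le.mpr hc1)
  · intro hinv p hp
    obtain ⟨x, hx0, hx⟩ := hglob p
    have hmem : ∀ t, 0 ≤ t → x t ∈ X := hinv x hx (hx0.symm ▸ hp)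
    show liminf _ _ = 0
    apply Filter.Tendsto.liminf_eq
    have hlo := hasDerivAt_iff_isLittleO.mp (hx 0)
    have hten : Tendsto (fun t : ℝ => ‖x t - x 0 - (t - 0) • f (x 0)‖ / ‖t - (0:ℝ)‖)
        (𝓝 0) (𝓝 0) := hlo.norm_norm.tendsto_div_nhds_zero
    have hten' : Tendsto (fun t : ℝ => ‖x t - x 0 - (t - 0) • f (x 0)‖ / ‖t - (0:ℝ)‖)
        (𝓝[>] (0:ℝ)) (𝓝 0) := hten.mono_left nhdsWithin_le_nhds
    apply squeeze_zero' (f := fun t : ℝ => infDist (p + t • f p) X / t)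
      (g := fun t : ℝ => ‖x t - x 0 - (t - 0) • f (x 0)‖ / ‖t - (0:ℝ)‖)
    · filter_upwards [self_mem_nhdsWithin] with t (hh : 0 < t)
      exact div_nonneg infDist_nonneg hh.le
    · filter_upwards [self_mem_nhdsWithin] with t (hh : 0 < t)
      have h1 : infDist (p + t • f p) X ≤ dist (p + t • f p) (x t) :=
        infDist_le_dist_of_mem (hmem t hh.le)
      have h2 : dist (p + t • f p) (x t) = ‖x t - x 0 - (t - 0) • f (x 0)‖ := by
        rw [hx0, dist_eq_norm, sub_zero, ← norm_neg]
        congr 1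
        abel
      have h3 : ‖t - (0:ℝ)‖ = t := by
        rw [sub_zero, Real.norm_eq_abs, abs_of_pos hh]
      rw [← h2, h3]
      gcongr
    · exact hten'
end

section
/- Consider gradient-play with barrier on integrator agents: ẏ = -F(y) - ∇φ(y) on Ω° = {y : g(y) < 0}, where F is monotone and Lipschitz, φ is the convex log-barrier whose value tends to +∞ at ∂Ω, and y* ∈ Ω° satisfies F(y*) + ∇φ(y*) = 0. Then every maximal solution with y(0) ∈ Ω° remains in Ω° for all t ≥ 0, and the function t ↦ ½‖y(t) - y*‖² is nonincreasing. -/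
open scoped RealInnerProductSpace
open Set

section Aux
variable {E : Type*} [NormedAddCommGroup E] [InnerProductSpace ℝ E] [CompleteSpace E]

lemma inner_gradient (f : E → ℝ) (x v : E) : ⟪gradient f x, v⟫ = fderiv ℝ f x v := by
  rw [gradient, ← InnerProductSpace.toDual_apply_apply, LinearIsometryEquiv.apply_symm_apply]

/-- Subgradient inequality for a differentiable convex function on an open set. -/
lemma grad_inner_le {U : Set E} (hU : IsOpen U) {φ : E → ℝ} (hc : ConvexOn ℝ U φ)
    (hd : ∀ x ∈ U, DifferentiableAt ℝ φ x) {a b : E} (ha : a ∈ U) (hb : b ∈ U) :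
    ⟪gradient φ a, b - a⟫ ≤ φ b - φ a := by
  set q : ℝ → ℝ := fun s => φ (a + s • (b - a)) with hq
  have hcurve : ∀ s : ℝ, HasDerivAt (fun s : ℝ => a + s • (b - a)) (b - a) s := by
    intro s
    simpa using ((hasDerivAt_id s).smul_const (b - a)).const_add a
  have hderiv : HasDerivAt q (fderiv ℝ φ a (b - a)) 0 := by
    have h1 : HasFDerivAt φ (fderiv ℝ φ a) (a + (0:ℝ) • (b - a)) := by
      simpa using (hd a ha).hasFDerivAt
    exact h1.comp_hasDerivAt 0 (hcurve 0)
  have hcomb : ∀ s : ℝ, a + s • (b - a) = (1 - s) • a + s • b := by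
    intro s; module
  have hq0 : q 0 = φ a := by simp [hq]
  have hq1 : q 1 = φ b := by simp [hq]
  have hslope : ∀ s : ℝ, s ∈ Ioo (0:ℝ) 1 → q s ≤ q 0 + s * (q 1 - q 0) := by
    intro s hs
    have := hc.2 ha hb (show (0:ℝ) ≤ 1 - s by linarith [hs.2]) hs.1.le (by ring)
    rw [hq0, hq1]
    simp only [hq, hcomb s, smul_eq_mul] at this ⊢
    nlinarith [this]
  have hten : Filter.Tendsto (slope q 0) (nhdsWithin 0 (Ioi 0)) (nhds (fderiv ℝ φ a (b - a))) := by
    have := hasDerivAt_iff_tendsto_slope.mp hderiv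
    exact this.mono_left (nhdsWithin_mono _ (fun x hx => ne_of_gt hx))
  have hle : fderiv ℝ φ a (b - a) ≤ q 1 - q 0 := by
    refine le_of_tendsto hten ?_
    filter_upwards [Ioo_mem_nhdsGT_of_mem (by norm_num : (0:ℝ) ∈ Ico (0:ℝ) 1)] with s hs
    have h1 := hslope s hs
    have hspos : (0:ℝ) < s := hs.1
    rw [slope_def_field]
    simp only [sub_zero]
    rw [div_le_iff₀ hspos]
    nlinarith
  have hgrad : ⟪gradient φ a, b - a⟫ = fderiv ℝ φ a (b - a) := inner_gradient φ a (b - a)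
  rw [hgrad, ← hq0, ← hq1]; exact hle

lemma grad_mono {U : Set E} (hU : IsOpen U) {φ : E → ℝ} (hc : ConvexOn ℝ U φ)
    (hd : ∀ x ∈ U, DifferentiableAt ℝ φ x) {a b : E} (ha : a ∈ U) (hb : b ∈ U) :
    0 ≤ ⟪a - b, gradient φ a - gradient φ b⟫ := by
  have h1 := grad_inner_le hU hc hd ha hb
  have h2 := grad_inner_le hU hc hd hb ha
  have e1 : ⟪a - b, gradient φ a - gradient φ b⟫
      = -⟪gradient φ a, b - a⟫ - ⟪gradient φ b, a - b⟫ := by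
    have c1 : ⟪a - b, gradient φ a⟫ = -⟪gradient φ a, b - a⟫ := by
      rw [real_inner_comm, show b - a = -(a - b) from by abel, inner_neg_right, neg_neg]
    have c2 : ⟪a - b, gradient φ b⟫ = ⟪gradient φ b, a - b⟫ := real_inner_comm _ _
    rw [inner_sub_right, c1, c2]
  rw [e1]; linarith

end Aux

set_option maxHeartbeats 1000000 in
/-- gradient-play with log-barrier on integrator agents:
`ẏ = -F(y) - ∇φ(y)`. Every solution starting in the interior feasible set stays there
for all `t ≥ 0`, and `t ↦ ½‖y(t) - y*‖²` is nonincreasing on `[0, ∞)`. -/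
theorem stmt14 {m p : ℕ}
    (F : EuclideanSpace ℝ (Fin m) → EuclideanSpace ℝ (Fin m))
    (hFmono : ∀ y y', 0 ≤ ⟪y - y', F y - F y'⟫)
    (θ : NNReal) (hFLip : LipschitzWith θ F)
    (g : Fin p → EuclideanSpace ℝ (Fin m) → ℝ)
    (hgconv : ∀ ℓ, ConvexOn ℝ Set.univ (g ℓ))
    (hgC2 : ∀ ℓ, ContDiff ℝ 2 (g ℓ))
    (hcompact : IsCompact {y : EuclideanSpace ℝ (Fin m) | ∀ ℓ, g ℓ y ≤ 0})
    (hslater : ∃ yhat, ∀ ℓ, g ℓ yhat < 0)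
    (ρ : ℝ) (hρ : 0 < ρ)
    (φ : EuclideanSpace ℝ (Fin m) → ℝ)
    (hφ : ∀ y, (∀ ℓ, g ℓ y < 0) → φ y = -ρ * ∑ ℓ, Real.log (-(g ℓ y)))
    (ystar : EuclideanSpace ℝ (Fin m)) (hystar : ∀ ℓ, g ℓ ystar < 0)
    (hstat : F ystar + gradient φ ystar = 0)
    (y : ℝ → EuclideanSpace ℝ (Fin m))
    (hsol : ∀ t, HasDerivAt y (-(F (y t)) - gradient φ (y t)) t)
    (h0 : ∀ ℓ, g ℓ (y 0) < 0) :
    (∀ t, 0 ≤ t → ∀ ℓ, g ℓ (y t) < 0) ∧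
      AntitoneOn (fun t => (1 / 2) * ‖y t - ystar‖ ^ 2) (Set.Ici (0 : ℝ)) := by
  classical
  set U : Set (EuclideanSpace ℝ (Fin m)) := {z | ∀ ℓ, g ℓ z < 0} with hUdef
  have hgdiff : ∀ ℓ, Differentiable ℝ (g ℓ) := fun ℓ =>
    (hgC2 ℓ).differentiable (by norm_num)
  have hgcont : ∀ ℓ, Continuous (g ℓ) := fun ℓ => (hgdiff ℓ).continuous
  have hUopen : IsOpen U := by
    rw [hUdef, Set.setOf_forall]
    exact isOpen_iInter_of_finite fun ℓ => (isOpen_Iio).preimage (hgcont ℓ)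
  have hUconv : Convex ℝ U := by
    intro x hx z hz a b ha hb hab
    intro ℓ
    have h1 := (hgconv ℓ).2 (mem_univ x) (mem_univ z) ha hb hab
    simp only [smul_eq_mul] at h1
    have hx' := hx ℓ; have hz' := hz ℓ
    rcases eq_or_lt_of_le ha with h | h
    · have hb1 : b = 1 := by linarith
      calc g ℓ (a • x + b • z) ≤ a * g ℓ x + b * g ℓ z := h1
        _ < 0 := by rw [← h, hb1]; simpa using hz'
    · calc g ℓ (a • x + b • z) ≤ a * g ℓ x + b * g ℓ z := h1
        _ < 0 := by nlinarith
  have hφconv : ConvexOn ℝ U φ := by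
    refine ⟨hUconv, ?_⟩
    intro x hx z hz a b ha hb hab
    have hxz : a • x + b • z ∈ U := hUconv hx hz ha hb hab
    rw [hφ x hx, hφ z hz, hφ _ hxz]
    have key : ∀ ℓ : Fin p, a * Real.log (-(g ℓ x)) + b * Real.log (-(g ℓ z))
        ≤ Real.log (-(g ℓ (a • x + b • z))) := by
      intro ℓ
      have hgx : (0:ℝ) < -(g ℓ x) := by linarith [hx ℓ]
      have hgz : (0:ℝ) < -(g ℓ z) := by linarith [hz ℓ]
      have h1 := (hgconv ℓ).2 (mem_univ x) (mem_univ z) ha hb hab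
      simp only [smul_eq_mul] at h1
      have h2 : a * (-(g ℓ x)) + b * (-(g ℓ z)) ≤ -(g ℓ (a • x + b • z)) := by linarith
      have h3 := strictConcaveOn_log_Ioi.concaveOn.2 (mem_Ioi.mpr hgx) (mem_Ioi.mpr hgz)
        ha hb hab
      simp only [smul_eq_mul] at h3
      have h4 : (0:ℝ) < a * (-(g ℓ x)) + b * (-(g ℓ z)) := by
        rcases eq_or_lt_of_le ha with h | h
        · have hb1 : b = 1 := by linarith
          rw [← h, hb1]; simpa using hgz
        · nlinarith [mul_nonneg hb hgz.le, mul_pos h hgx]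
      calc a * Real.log (-(g ℓ x)) + b * Real.log (-(g ℓ z))
          ≤ Real.log (a * (-(g ℓ x)) + b * (-(g ℓ z))) := h3
        _ ≤ Real.log (-(g ℓ (a • x + b • z))) := Real.log_le_log h4 h2
    have hsum : ∑ ℓ, (a * Real.log (-(g ℓ x)) + b * Real.log (-(g ℓ z)))
        ≤ ∑ ℓ, Real.log (-(g ℓ (a • x + b • z))) := Finset.sum_le_sum fun ℓ _ => key ℓ
    rw [Finset.sum_add_distrib, ← Finset.mul_sum, ← Finset.mul_sum] at hsum
    have := mul_le_mul_of_nonneg_left hsum hρ.le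
    simp only [smul_eq_mul]
    nlinarith [this]
  have hφdiff : ∀ z ∈ U, DifferentiableAt ℝ φ z := by
    intro z hz
    have hψ : DifferentiableAt ℝ (fun w => -ρ * ∑ ℓ, Real.log (-(g ℓ w))) z := by
      refine DifferentiableAt.const_mul ?_ _
      refine DifferentiableAt.fun_sum fun ℓ _ => ?_
      refine DifferentiableAt.log ((hgdiff ℓ z).neg) ?_
      have := hz ℓ; exact ne_of_gt (by linarith [hz ℓ])
    refine hψ.congr_of_eventuallyEq ?_
    filter_upwards [hUopen.mem_nhds hz] with w hw
    exact hφ w hw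
  have hmono := fun {a b} (ha : a ∈ U) (hb : b ∈ U) => grad_mono hUopen hφconv hφdiff ha hb
  have hycont : Continuous y := by
    rw [continuous_iff_continuousAt]; exact fun t => (hsol t).continuousAt
  -- derivative of φ ∘ y at times where y t ∈ U
  have hφyderiv : ∀ t, y t ∈ U →
      HasDerivAt (fun s => φ (y s)) ⟪gradient φ (y t), -(F (y t)) - gradient φ (y t)⟫ t := by
    intro t ht
    have h1 := (hφdiff _ ht).hasFDerivAt.comp_hasDerivAt t (hsol t)
    rw [inner_gradient]; exact h1
  -- derivative of Lyapunov function
  have hVderiv : ∀ t, HasDerivAt (fun s => (1/2) * ‖y s - ystar‖^2)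
      ⟪y t - ystar, -(F (y t)) - gradient φ (y t)⟫ t := by
    intro t
    have hw : HasDerivAt (fun s => y s - ystar) (-(F (y t)) - gradient φ (y t)) t :=
      (hsol t).sub_const ystar
    have h1 := (hw.inner ℝ hw).const_mul (1/2 : ℝ)
    have h2 : (fun s => (1/2 : ℝ) * ⟪y s - ystar, y s - ystar⟫)
        = fun s => (1/2) * ‖y s - ystar‖^2 := by
      funext s; rw [real_inner_self_eq_norm_sq]
    rw [h2] at h1
    refine h1.congr_deriv ?_
    rw [real_inner_comm (-(F (y t)) - gradient φ (y t)) (y t - ystar)]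
    ring
  -- nonpositivity of Lyapunov derivative on U
  have hVle : ∀ x : EuclideanSpace ℝ (Fin m), x ∈ U → ⟪x - ystar, -(F x) - gradient φ x⟫ ≤ 0 := by
    intro x hx
    have heq : -(F x) - gradient φ x
        = -((F x - F ystar) + (gradient φ x - gradient φ ystar)) - (F ystar + gradient φ ystar) := by
      abel
    rw [heq, hstat, sub_zero, inner_neg_right, inner_add_right]
    have := hFmono x ystar
    have h2 := hmono hx (show ystar ∈ U from hystar)
    linarith
  -- bound K on ‖F‖ over the compact feasible set
  set C : Set (EuclideanSpace ℝ (Fin m)) := {z | ∀ ℓ, g ℓ z ≤ 0} with hCdef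
  have hUC : U ⊆ C := fun z hz ℓ => (hz ℓ).le
  obtain ⟨K0, hK0⟩ := hcompact.exists_bound_of_continuousOn hFLip.continuous.continuousOn
  set K := max K0 0 with hKdef
  have hK : ∀ z ∈ C, ‖F z‖ ≤ K := fun z hz => le_trans (hK0 z hz) (le_max_left _ _)
  have hKnn : (0:ℝ) ≤ K := le_max_right _ _
  -- bound M on -(g ℓ) over C
  have hMex : ∀ ℓ : Fin p, ∃ c : ℝ, ∀ z ∈ C, ‖g ℓ z‖ ≤ c := fun ℓ =>
    hcompact.exists_bound_of_continuousOn (hgcont ℓ).continuousOn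
  choose Mf hMf using hMex
  set M : ℝ := 1 + ∑ ℓ, max (Mf ℓ) 0 with hMdef
  have hMsum : (0:ℝ) ≤ ∑ ℓ, max (Mf ℓ) 0 :=
    Finset.sum_nonneg fun ℓ _ => le_max_right _ _
  have hM1 : (1:ℝ) ≤ M := by rw [hMdef]; linarith
  have hlogM : (0:ℝ) ≤ Real.log M := Real.log_nonneg hM1
  have hM : ∀ (ℓ : Fin p) (z), z ∈ C → -(g ℓ z) ≤ M := by
    intro ℓ z hz
    have h1 : -(g ℓ z) ≤ ‖g ℓ z‖ := by rw [Real.norm_eq_abs]; exact neg_le_abs _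
    have h3 : max (Mf ℓ) 0 ≤ ∑ ℓ', max (Mf ℓ') 0 :=
      Finset.single_le_sum (fun i _ => le_max_right (Mf i) 0) (Finset.mem_univ ℓ)
    have := hMf ℓ z hz
    have h2 : Mf ℓ ≤ max (Mf ℓ) 0 := le_max_left _ _
    rw [hMdef]; linarith
  -- derivative bound for φ ∘ y on the feasible set
  have hφbnd : ∀ x ∈ U, ⟪gradient φ x, -(F x) - gradient φ x⟫ ≤ K^2/4 := by
    intro x hx
    set G := gradient φ x with hGdef
    have h1 : ⟪G, -(F x) - G⟫ = -⟪G, F x⟫ - ‖G‖^2 := by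
      rw [inner_sub_right, inner_neg_right, real_inner_self_eq_norm_sq]
    have h2 : -⟪G, F x⟫ ≤ ‖G‖ * ‖F x‖ := by
      have ha := abs_real_inner_le_norm G (F x)
      have := neg_abs_le (⟪G, F x⟫ : ℝ)
      linarith
    have h3 : ‖F x‖ ≤ K := hK x (hUC hx)
    have hGnn : (0:ℝ) ≤ ‖G‖ := norm_nonneg _
    rw [h1]
    nlinarith [sq_nonneg (‖G‖ - K/2), mul_le_mul_of_nonneg_left h3 hGnn]
  -- invariance
  have key : ∀ t, 0 ≤ t → y t ∈ U := by
    by_contra hcon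
    obtain ⟨t₂, ht₂⟩ := not_forall.mp hcon
    obtain ⟨ht₂0, ht₂U⟩ := Classical.not_imp.mp ht₂
    set A : Set ℝ := {t | 0 ≤ t ∧ y t ∉ U} with hAdef
    have hAne : A.Nonempty := ⟨t₂, ht₂0, ht₂U⟩
    have hAbdd : BddBelow A := ⟨0, fun s hs => hs.1⟩
    have hAclosed : IsClosed A := by
      have hA : A = Ici (0:ℝ) ∩ y ⁻¹' Uᶜ := by
        ext s; simp [hAdef, mem_Ici]
      rw [hA]
      exact isClosed_Ici.inter (hUopen.isClosed_compl.preimage hycont)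
    set t₁ := sInf A with ht₁def
    have ht₁A : t₁ ∈ A := hAclosed.csInf_mem hAne hAbdd
    have ht₁0 : 0 ≤ t₁ := ht₁A.1
    have ht₁U : y t₁ ∉ U := ht₁A.2
    have ht₁pos : 0 < t₁ := by
      rcases eq_or_lt_of_le ht₁0 with h | h
      · exact absurd (show y t₁ ∈ U from by rw [← h]; exact h0) ht₁U
      · exact h
    have hbefore : ∀ s, 0 ≤ s → s < t₁ → y s ∈ U := by
      intro s hs0 hst
      by_contra hsU
      exact absurd (csInf_le hAbdd ⟨hs0, hsU⟩) (not_le.mpr hst)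
    have ht₁C : y t₁ ∈ C := by
      intro ℓ
      have htend : Filter.Tendsto (fun s => g ℓ (y s)) (nhdsWithin t₁ (Iio t₁))
          (nhds (g ℓ (y t₁))) :=
        (((hgcont ℓ).comp hycont).continuousAt (x := t₁)).continuousWithinAt.tendsto
      refine le_of_tendsto htend ?_
      filter_upwards [Ioo_mem_nhdsLT_of_mem (show t₁ ∈ Ioc (0:ℝ) t₁ from ⟨ht₁pos, le_refl _⟩)]
        with s hs
      exact (hbefore s hs.1.le hs.2 ℓ).le
    -- bound on φ along the trajectory before t₁
    set B := φ (y 0) + K^2/4 * t₁ with hBdef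
    have hφle : ∀ t, 0 ≤ t → t < t₁ → φ (y t) ≤ B := by
      intro t ht0 htl
      have hr : ∀ s ∈ Icc (0:ℝ) t, HasDerivAt (fun s => K^2/4 * s - φ (y s))
          (K^2/4 - ⟪gradient φ (y s), -(F (y s)) - gradient φ (y s)⟫) s := by
        intro s hs
        have hsU : y s ∈ U := hbefore s hs.1 (lt_of_le_of_lt hs.2 htl)
        simpa using ((hasDerivAt_id s).const_mul (K^2/4)).fun_sub (hφyderiv s hsU)
      have hmon : MonotoneOn (fun s => K^2/4 * s - φ (y s)) (Icc 0 t) := by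
        apply monotoneOn_of_deriv_nonneg (convex_Icc 0 t)
        · intro s hs
          exact ((hr s hs).continuousAt).continuousWithinAt
        · intro s hs
          rw [interior_Icc] at hs
          exact ((hr s ⟨hs.1.le, hs.2.le⟩).differentiableAt).differentiableWithinAt
        · intro s hs
          rw [interior_Icc] at hs
          rw [(hr s ⟨hs.1.le, hs.2.le⟩).deriv]
          have := hφbnd (y s) (hbefore s hs.1.le (lt_trans hs.2 htl))
          linarith
      have h01 := hmon (show (0:ℝ) ∈ Icc 0 t from ⟨le_refl _, ht0⟩)
        (show t ∈ Icc 0 t from ⟨ht0, le_refl _⟩) ht0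
      simp only [mul_zero, zero_sub] at h01
      have hKt : K^2/4 * t ≤ K^2/4 * t₁ := by
        apply mul_le_mul_of_nonneg_left htl.le; positivity
      rw [hBdef]; linarith
    -- the blow-up of the barrier near the boundary gives a contradiction
    obtain ⟨ℓ₀, hℓ₀⟩ : ∃ ℓ, ¬ g ℓ (y t₁) < 0 := by
      by_contra h; push_neg at h; exact ht₁U h
    have hℓ₀0 : g ℓ₀ (y t₁) = 0 := le_antisymm (ht₁C ℓ₀) (not_lt.mp hℓ₀)
    set ε := Real.exp (-(B + 1 + p * ρ * Real.log M) / ρ) with hεdef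
    have hεpos : 0 < ε := Real.exp_pos _
    have htend₀ : Filter.Tendsto (fun s => g ℓ₀ (y s)) (nhdsWithin t₁ (Iio t₁)) (nhds 0) := by
      rw [← hℓ₀0]
      exact (((hgcont ℓ₀).comp hycont).continuousAt (x := t₁)).continuousWithinAt.tendsto
    have hev : ∀ᶠ s in nhdsWithin t₁ (Iio t₁), |g ℓ₀ (y s)| < ε := by
      have := htend₀ (Metric.ball_mem_nhds 0 hεpos)
      filter_upwards [this] with s hs
      simpa [Real.dist_eq] using hs
    obtain ⟨t, htε, ht01⟩ := (hev.and (Ioo_mem_nhdsLT_of_mem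
      (show t₁ ∈ Ioc (0:ℝ) t₁ from ⟨ht₁pos, le_refl _⟩))).exists
    have htU : y t ∈ U := hbefore t ht01.1.le ht01.2
    have hεlt : -(g ℓ₀ (y t)) < ε := lt_of_le_of_lt (neg_le_abs _) htε
    have hlow : B + 1 ≤ φ (y t) := by
      rw [hφ _ htU]
      have hpos₀ : (0:ℝ) < -(g ℓ₀ (y t)) := by linarith [htU ℓ₀]
      have hterm₀ : Real.log (-(g ℓ₀ (y t))) ≤ Real.log ε := Real.log_le_log hpos₀ hεlt.le
      have hrest : ∑ ℓ ∈ Finset.univ.erase ℓ₀, Real.log (-(g ℓ (y t)))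
          ≤ ∑ ℓ ∈ Finset.univ.erase ℓ₀, Real.log M := by
        refine Finset.sum_le_sum fun ℓ _ => ?_
        exact Real.log_le_log (by linarith [htU ℓ]) (hM ℓ _ (hUC htU))
      have hrest2 : ∑ ℓ ∈ Finset.univ.erase ℓ₀, Real.log M ≤ (p:ℝ) * Real.log M := by
        rw [Finset.sum_const, nsmul_eq_mul]
        apply mul_le_mul_of_nonneg_right _ hlogM
        have := Finset.card_erase_of_mem (Finset.mem_univ ℓ₀)
        rw [this]
        simp only [Finset.card_univ, Fintype.card_fin]
        exact_mod_cast Nat.sub_le p 1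
      have hsplit : ∑ ℓ, Real.log (-(g ℓ (y t)))
          = Real.log (-(g ℓ₀ (y t))) + ∑ ℓ ∈ Finset.univ.erase ℓ₀, Real.log (-(g ℓ (y t))) :=
        (Finset.add_sum_erase _ _ (Finset.mem_univ ℓ₀)).symm
      have hsum : ∑ ℓ, Real.log (-(g ℓ (y t))) ≤ Real.log ε + (p:ℝ) * Real.log M := by
        rw [hsplit]; linarith
      have hlogε : Real.log ε = -(B + 1 + p * ρ * Real.log M) / ρ := by
        rw [hεdef, Real.log_exp]
      have hρε : ρ * Real.log ε = -(B + 1 + p * ρ * Real.log M) := by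
        rw [hlogε]; field_simp
      have := mul_le_mul_of_nonneg_left hsum hρ.le
      nlinarith [this]
    exact absurd (hφle t ht01.1.le ht01.2) (not_le.mpr (by linarith))
  -- conclusion
  refine ⟨fun t ht => key t ht, ?_⟩
  apply antitoneOn_of_deriv_nonpos (convex_Ici 0)
  · intro t _
    exact ((hVderiv t).continuousAt).continuousWithinAt
  · intro t ht
    rw [interior_Ici] at ht
    exact (hVderiv t).differentiableAt.differentiableWithinAt
  · intro t ht
    rw [interior_Ici] at ht
    rw [(hVderiv t).deriv]
    exact hVle (y t) (key t ht.le)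
end
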